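/- There do not exist formal power series λ(x,t), g(x,t) ∈ C[[x,t]] with λ(x,0) = x^4 and g(x,0) ≡ 0, and a positive integer m, such that (λ(x,t))^2 − t^{2m} x = (x + g(x,t))^8. -/

import Mathlib

open MvPowerSeries

noncomputable section

namespace Stmt2Aux

lemma fin2_eq (u : Fin 2 →₀ ℕ) :
    u = Finsupp.single 0 (u 0) + Finsupp.single 1 (u 1) := by
  ext a; fin_cases a <;> simp [Finsupp.single_apply]

lemma eval0 (n k : ℕ) : ((Finsupp.single (0 : Fin 2) n + Finsupp.single 1 k : Fin 2 →₀ ℕ)) 0 = n := by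
  simp [Finsupp.single_apply]

lemma eval1 (n k : ℕ) : ((Finsupp.single (0 : Fin 2) n + Finsupp.single 1 k : Fin 2 →₀ ℕ)) 1 = k := by
  simp [Finsupp.single_apply]

noncomputable def E : MvPowerSeries (Fin 2) ℂ →+* PowerSeries (PowerSeries ℂ) where
  toFun f := PowerSeries.mk fun k => PowerSeries.mk fun n =>
    MvPowerSeries.coeff (Finsupp.single 0 n + Finsupp.single 1 k) f
  map_zero' := by ext k n; simp
  map_add' f g := by ext k n; simp
  map_one' := by
    ext k n
    simp only [PowerSeries.coeff_mk, MvPowerSeries.coeff_one]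
    rw [PowerSeries.coeff_one]
    by_cases hk : k = 0
    · subst hk
      rw [if_pos rfl, PowerSeries.coeff_one]
      by_cases hn : n = 0 <;> simp [hn, Finsupp.single_eq_zero]
    · rw [if_neg hk, if_neg, map_zero]
      intro h
      have := congrArg (fun u => u 1) h
      simpa [eval1] using hk (by simpa [eval1] using this)
  map_mul' f g := by
    ext k n
    simp only [PowerSeries.coeff_mk, MvPowerSeries.coeff_mul, PowerSeries.coeff_mul,
      map_sum, Finset.sum_mul]
    rw [← Finset.sum_product']
    refine Finset.sum_bij' (fun p _ => ((p.1 1, p.2 1), (p.1 0, p.2 0)))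
      (fun q _ => (Finsupp.single 0 q.2.1 + Finsupp.single 1 q.1.1,
        Finsupp.single 0 q.2.2 + Finsupp.single 1 q.1.2)) ?_ ?_ ?_ ?_ ?_
    · rintro ⟨u, v⟩ hm
      rw [Finset.HasAntidiagonal.mem_antidiagonal] at hm
      simp only [Finset.mem_product, Finset.HasAntidiagonal.mem_antidiagonal]
      constructor
      · have := congrArg (fun w : Fin 2 →₀ ℕ => w 1) hm
        simpa [eval1] using this
      · have := congrArg (fun w : Fin 2 →₀ ℕ => w 0) hm
        simpa [eval0] using this
    · rintro ⟨⟨a, b⟩, ⟨i, j⟩⟩ hm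
      simp only [Finset.mem_product, Finset.HasAntidiagonal.mem_antidiagonal] at hm
      rw [Finset.HasAntidiagonal.mem_antidiagonal]
      ext c
      fin_cases c <;> simp [Finsupp.single_apply, hm.1, hm.2]
    · rintro ⟨u, v⟩ _
      simp only [Prod.mk.injEq]
      exact ⟨(fin2_eq u).symm, (fin2_eq v).symm⟩
    · rintro ⟨⟨a, b⟩, ⟨i, j⟩⟩ _
      simp [eval0, eval1]
    · rintro ⟨u, v⟩ _
      rw [← fin2_eq u, ← fin2_eq v]


lemma coeff_E (f : MvPowerSeries (Fin 2) ℂ) (k n : ℕ) :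
    PowerSeries.coeff n (PowerSeries.coeff k (E f)) =
      MvPowerSeries.coeff (Finsupp.single 0 n + Finsupp.single 1 k) f := by
  simp [E]

lemma single_fin2 (s : Fin 2) (a : ℕ) (n k : ℕ) :
    (Finsupp.single (0 : Fin 2) n + Finsupp.single 1 k = Finsupp.single s a) ↔
      (n = (Finsupp.single s a : Fin 2 →₀ ℕ) 0 ∧ k = (Finsupp.single s a : Fin 2 →₀ ℕ) 1) := by
  constructor
  · intro h
    exact ⟨by rw [← h, eval0], by rw [← h, eval1]⟩
  · rintro ⟨h1, h2⟩
    have hc : ∀ c : Fin 2, c = 0 ∨ c = 1 := by decide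
    refine Finsupp.ext fun c => ?_
    rcases hc c with rfl | rfl
    · rw [eval0, h1]
    · rw [eval1, h2]

lemma E_X0 : E (X 0) = PowerSeries.C PowerSeries.X := by
  ext k n
  rw [coeff_E, PowerSeries.coeff_C,
    show (X 0 : MvPowerSeries (Fin 2) ℂ) = MvPowerSeries.monomial (Finsupp.single 0 1) 1 from rfl,
    MvPowerSeries.coeff_monomial]
  by_cases hk : k = 0 <;> by_cases hn : n = 1 <;>
    simp [hk, hn, single_fin2, Finsupp.single_apply, PowerSeries.coeff_X, Finsupp.single_eq_single_iff]

lemma E_X1 : E (X 1) = PowerSeries.X := by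
  ext k n
  rw [coeff_E, PowerSeries.coeff_X,
    show (X 1 : MvPowerSeries (Fin 2) ℂ) = MvPowerSeries.monomial (Finsupp.single 1 1) 1 from rfl,
    MvPowerSeries.coeff_monomial]
  by_cases hk : k = 1 <;> by_cases hn : n = 0 <;>
    simp [hk, hn, single_fin2, Finsupp.single_apply, PowerSeries.coeff_one, apply_ite, Finsupp.single_eq_single_iff]

end Stmt2Aux

open Stmt2Aux in
/-- There are no formal power series `l(x,t), g(x,t) ∈ ℂ[[x,t]]` with `l(x,0) = x⁴`,
`g(x,0) ≡ 0`, and a positive integer `m`, such that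
`l(x,t)² - t^{2m}·x = (x + g(x,t))⁸`.  Here `ℂ[[x,t]]` is modelled by
`MvPowerSeries (Fin 2) ℂ` with `x = X 0` and `t = X 1`; setting `t = 0` corresponds to
the coefficients of the monomials `x^n`. -/
theorem stmt_2 :
    ¬ ∃ (l g : MvPowerSeries (Fin 2) ℂ) (m : ℕ), 0 < m ∧
      (∀ n : ℕ, coeff (Finsupp.single 0 n) l = if n = 4 then 1 else 0) ∧
      (∀ n : ℕ, coeff (Finsupp.single 0 n) g = 0) ∧
      l ^ 2 - (X 1) ^ (2 * m) * X 0 = (X 0 + g) ^ 8 := by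
  rintro ⟨l, g, m, hm, hl, hg, heq⟩
  set L : PowerSeries (PowerSeries ℂ) := E l with hL
  set G : PowerSeries (PowerSeries ℂ) := E g with hG
  set B : PowerSeries (PowerSeries ℂ) := PowerSeries.C PowerSeries.X + G with hB
  -- transported equation
  have heq' : (L - B ^ 4) * (L + B ^ 4) =
      PowerSeries.X ^ (2 * m) * PowerSeries.C PowerSeries.X := by
    have h1 := congrArg E heq
    simp only [map_sub, map_mul, map_pow, map_add, E_X0, E_X1] at h1
    rw [← hL, ← hG, ← hB] at h1
    linear_combination h1
  -- constant (in t) coefficients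
  have hL0 : PowerSeries.coeff 0 L = PowerSeries.X ^ 4 := by
    ext n
    rw [hL, coeff_E, Finsupp.single_zero, add_zero, hl n, PowerSeries.coeff_X_pow]
  have hG0 : PowerSeries.coeff 0 G = 0 := by
    ext n
    rw [hG, coeff_E, Finsupp.single_zero, add_zero, hg n, map_zero]
  have hS0 : PowerSeries.coeff 0 (L + B ^ 4) =
      PowerSeries.X ^ 4 + PowerSeries.X ^ 4 := by
    rw [map_add, hL0]
    congr 1
    rw [PowerSeries.coeff_zero_eq_constantCoeff, map_pow, hB, map_add,
      PowerSeries.constantCoeff_C, ← PowerSeries.coeff_zero_eq_constantCoeff, hG0, add_zero]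
  have hX4ne : (PowerSeries.X ^ 4 + PowerSeries.X ^ 4 : PowerSeries ℂ) ≠ 0 := by
    intro h
    have := congrArg (PowerSeries.coeff 4) h
    simp [PowerSeries.coeff_X_pow] at this
  -- the key divisibility
  have key : ∀ j, j < 2 * m → PowerSeries.coeff j (L - B ^ 4) = 0 := by
    intro j
    induction j using Nat.strong_induction_on with
    | _ j IH =>
      intro hj
      have h2 := congrArg (PowerSeries.coeff j) heq'
      rw [PowerSeries.coeff_mul, mul_comm (PowerSeries.X ^ (2 * m)),
        PowerSeries.coeff_mul_X_pow', if_neg (by omega)] at h2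
      rw [Finset.sum_eq_single (j, 0)] at h2
      · have : PowerSeries.coeff j (L - B ^ 4) *
            (PowerSeries.X ^ 4 + PowerSeries.X ^ 4) = 0 := by
          rw [← hS0]; exact h2
        rcases mul_eq_zero.mp this with h | h
        · exact h
        · exact absurd h hX4ne
      · rintro ⟨a, b⟩ hmem hne
        rw [Finset.HasAntidiagonal.mem_antidiagonal] at hmem
        have ha : a < j := by
          rcases Nat.lt_or_ge a j with h | h
          · exact h
          · exfalso; exact hne (by ext <;> omega)
        rw [IH a ha (by omega), zero_mul]
      · intro h
        exact absurd (Finset.HasAntidiagonal.mem_antidiagonal.mpr (by omega)) h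
  -- final contradiction at t^(2m), x^1
  have h3 := congrArg (PowerSeries.coeff (2 * m)) heq'
  rw [PowerSeries.coeff_mul, mul_comm (PowerSeries.X ^ (2 * m)),
    PowerSeries.coeff_mul_X_pow', if_pos (le_refl _), Nat.sub_self,
    PowerSeries.coeff_zero_eq_constantCoeff, PowerSeries.constantCoeff_C] at h3
  rw [Finset.sum_eq_single (2 * m, 0)] at h3
  · rw [hS0] at h3
    have h4 := congrArg (PowerSeries.coeff 1) h3
    rw [mul_add, map_add, PowerSeries.coeff_mul_X_pow'] at h4
    simp [PowerSeries.coeff_X] at h4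
  · rintro ⟨a, b⟩ hmem hne
    rw [Finset.HasAntidiagonal.mem_antidiagonal] at hmem
    have ha : a < 2 * m := by
      rcases Nat.lt_or_ge a (2 * m) with h | h
      · exact h
      · exfalso; exact hne (by ext <;> omega)
    rw [key a ha, zero_mul]
  · intro h
    exact absurd (Finset.HasAntidiagonal.mem_antidiagonal.mpr (by omega)) h
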